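/- Let l ≥ 1, let n₁, …, n_l be positive integers and a₁, …, a_l integers. Assume: (i) there is some i with n_i even and a_i = −1; (ii) there is some j with |a_j| > 1; and (iii) |a_k| ≥ 2 for every k with n_k odd. Then ℓ(m) = 0 for every odd positive integer m, and there exists N > 0 such that ℓ(m) ≠ 0 for every even integer m > N, where ℓ(m) := ∑_{r ∣ m} μ(m/r) ∏_{i=1}^{l} (1 + (−1)^{n_i} a_i^r). -/

import Mathlib

open Finset

private lemma geom_le_pow (P : ℤ) (hP : 2 ≤ P) (k : ℕ) :
    ∑ r ∈ Finset.range k, P ^ r ≤ P ^ k := by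
  induction k with
  | zero => simp
  | succ k ih =>
      rw [Finset.sum_range_succ, pow_succ]
      have h1 : P ^ k * 2 ≤ P ^ k * P :=
        mul_le_mul_of_nonneg_left hP (pow_nonneg (by linarith) k)
      linarith

theorem lefschetz_period_numbers_even_case
    (l : ℕ) (hl : 1 ≤ l) (n : Fin l → ℕ) (hn : ∀ i, 0 < n i) (a : Fin l → ℤ)
    (h1 : ∃ i, Even (n i) ∧ a i = -1)
    (h2 : ∃ j, 1 < |a j|)
    (h3 : ∀ k, Odd (n k) → 2 ≤ |a k|) :
    (∀ m : ℕ, 0 < m → Odd m →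
      (∑ r ∈ m.divisors, ArithmeticFunction.moebius (m / r) *
          ∏ i, (1 + (-1) ^ n i * a i ^ r)) = 0) ∧
    ∃ N : ℕ, 0 < N ∧ ∀ m : ℕ, N < m → Even m →
      (∑ r ∈ m.divisors, ArithmeticFunction.moebius (m / r) *
          ∏ i, (1 + (-1) ^ n i * a i ^ r)) ≠ 0 := by
  obtain ⟨i0, hi0e, hi0a⟩ := h1
  obtain ⟨j, hj⟩ := h2
  have hLodd : ∀ r : ℕ, Odd r → (∏ i, (1 + (-1) ^ n i * a i ^ r)) = 0 := by
    intro r hr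
    apply Finset.prod_eq_zero (Finset.mem_univ i0)
    rw [hi0a, hi0e.neg_one_pow, hr.neg_one_pow]
    ring
  constructor
  · intro m hm hodd
    apply Finset.sum_eq_zero
    intro r hr
    have hrd : r ∣ m := (Nat.mem_divisors.mp hr).1
    have hrodd : Odd r := by
      rcases Nat.even_or_odd r with he | ho
      · have h2m : 2 ∣ m := (he.two_dvd).trans hrd
        rw [Nat.odd_iff] at hodd; omega
      · exact ho
    rw [hLodd r hrodd, mul_zero]
  -- Even case
  set P : ℤ := ∏ i, max 1 |a i| with hPdef
  have hPi : ∀ i : Fin l, (1 : ℤ) ≤ max 1 |a i| := fun i => le_max_left _ _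
  have hP2 : 2 ≤ P := by
    rw [hPdef, ← Finset.mul_prod_erase _ _ (Finset.mem_univ j)]
    have h1 : (1:ℤ) ≤ ∏ i ∈ Finset.univ.erase j, max 1 |a i| := by
      have := Finset.prod_le_prod (s := Finset.univ.erase j) (f := fun _ => (1:ℤ))
        (g := fun i => max 1 |a i|) (fun i _ => by norm_num) (fun i _ => hPi i)
      simpa using this
    have h2 : (2:ℤ) ≤ max 1 |a j| := le_trans hj (le_max_right _ _)
    nlinarith
  have hP0 : (0 : ℤ) < P := by linarith
  -- upper bound for |L r|
  have hupper : ∀ r : ℕ, |∏ i, (1 + (-1) ^ n i * a i ^ r)| ≤ 2 ^ l * P ^ r := by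
    intro r
    rw [Finset.abs_prod]
    have : ∀ i : Fin l, |1 + (-1) ^ n i * a i ^ r| ≤ 2 * (max 1 |a i|) ^ r := by
      intro i
      calc |1 + (-1) ^ n i * a i ^ r| ≤ |(1:ℤ)| + |(-1) ^ n i * a i ^ r| := abs_add_le _ _
      _ = 1 + |a i| ^ r := by simp [abs_mul, abs_pow]
      _ ≤ (max 1 |a i|) ^ r + (max 1 |a i|) ^ r := by
          gcongr
          · exact one_le_pow₀ (le_max_left _ _)
          · exact le_max_right _ _
      _ = 2 * (max 1 |a i|) ^ r := by ring
    calc (∏ i, |1 + (-1) ^ n i * a i ^ r|) ≤ ∏ i, 2 * (max 1 |a i|) ^ r :=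
          Finset.prod_le_prod (fun i _ => abs_nonneg _) (fun i _ => this i)
    _ = 2 ^ l * P ^ r := by
          rw [Finset.prod_mul_distrib, Finset.prod_const, Finset.card_univ, Fintype.card_fin,
            ← Finset.prod_pow]
  -- lower bound for |L m| at even m ≥ 1
  have hlower : ∀ m : ℕ, 0 < m → Even m →
      P ^ m ≤ 2 ^ l * |∏ i, (1 + (-1) ^ n i * a i ^ m)| := by
    intro m hm hme
    rw [Finset.abs_prod]
    have key : ∀ i : Fin l, (max 1 |a i|) ^ m ≤ 2 * |1 + (-1) ^ n i * a i ^ m| := by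
      intro i
      have hpos : (0:ℤ) ≤ a i ^ m := hme.pow_nonneg _
      have habs : a i ^ m = |a i| ^ m := by rw [← abs_pow, abs_of_nonneg hpos]
      rcases Nat.even_or_odd (n i) with he | ho
      · rw [he.neg_one_pow, one_mul, habs]
        rcases le_or_gt 1 |a i| with h | h
        · have : |1 + |a i| ^ m| = 1 + |a i| ^ m :=
            abs_of_nonneg (by positivity)
          rw [this, max_eq_right h]
          nlinarith [pow_nonneg (abs_nonneg (a i)) m]
        · have ha0 : |a i| = 0 := by
            have := abs_nonneg (a i); omega
          rw [ha0, max_eq_left (by norm_num), one_pow, zero_pow (by omega)]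
          norm_num
      · have h2 : 2 ≤ |a i| := h3 i ho
        have hmax : max 1 |a i| = |a i| := max_eq_right (by linarith)
        rw [ho.neg_one_pow, neg_one_mul, habs, hmax]
        have h2m : (2:ℤ) ≤ |a i| ^ m := by
          calc (2:ℤ) = 2 ^ 1 := by norm_num
          _ ≤ 2 ^ m := pow_le_pow_right₀ (by norm_num) hm
          _ ≤ |a i| ^ m := pow_le_pow_left₀ (by norm_num) h2 m
        have : |1 + -(|a i| ^ m)| = |a i| ^ m - 1 := by
          rw [abs_of_nonpos (by linarith)]; ring
        rw [this]; linarith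
    calc P ^ m = ∏ i, (max 1 |a i|) ^ m := by rw [← Finset.prod_pow]
    _ ≤ ∏ i, 2 * |1 + (-1) ^ n i * a i ^ m| :=
        Finset.prod_le_prod (fun i _ => by positivity) (fun i _ => key i)
    _ = 2 ^ l * ∏ i, |1 + (-1) ^ n i * a i ^ m| := by
        rw [Finset.prod_mul_distrib, Finset.prod_const, Finset.card_univ, Fintype.card_fin]
  refine ⟨4 * l + 3, by omega, ?_⟩
  intro m hm hme
  have hm0 : 0 < m := by omega
  have h2m : 2 ∣ m := hme.two_dvd
  -- split off the r = m term
  have hmem : m ∈ m.divisors := Nat.mem_divisors_self m (by omega)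
  rw [← Finset.add_sum_erase _ _ hmem]
  rw [Nat.div_self hm0, ArithmeticFunction.moebius_apply_one]
  set Lm := ∏ i, (1 + (-1) ^ n i * a i ^ m) with hLm
  set S := ∑ r ∈ m.divisors.erase m, ArithmeticFunction.moebius (m / r) *
      ∏ i, (1 + (-1) ^ n i * a i ^ r) with hS
  -- bound |S|
  have hSbound : |S| ≤ 2 ^ l * P ^ (m / 2 + 1) := by
    calc |S| ≤ ∑ r ∈ m.divisors.erase m,
        |ArithmeticFunction.moebius (m / r) * ∏ i, (1 + (-1) ^ n i * a i ^ r)| :=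
        Finset.abs_sum_le_sum_abs _ _
    _ ≤ ∑ r ∈ m.divisors.erase m, 2 ^ l * P ^ r := by
        apply Finset.sum_le_sum
        intro r hr
        rw [abs_mul]
        calc |(ArithmeticFunction.moebius (m / r) : ℤ)| * |∏ i, (1 + (-1) ^ n i * a i ^ r)|
            ≤ 1 * |∏ i, (1 + (-1) ^ n i * a i ^ r)| := by
              apply mul_le_mul_of_nonneg_right _ (abs_nonneg _)
              exact_mod_cast ArithmeticFunction.abs_moebius_le_one
        _ = |∏ i, (1 + (-1) ^ n i * a i ^ r)| := one_mul _
        _ ≤ 2 ^ l * P ^ r := hupper r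
    _ ≤ ∑ r ∈ Finset.range (m / 2 + 1), 2 ^ l * P ^ r := by
        apply Finset.sum_le_sum_of_subset_of_nonneg
        · intro r hr
          rw [Finset.mem_erase, Nat.mem_divisors] at hr
          obtain ⟨hne, hdvd, _⟩ := hr
          rw [Finset.mem_range]
          obtain ⟨k, hk⟩ := hdvd
          have hk2 : 2 ≤ k := by
            rcases Nat.lt_or_ge k 2 with h | h
            · interval_cases k <;> omega
            · exact h
          have : r * 2 ≤ m := by nlinarith [Nat.pos_of_dvd_of_pos ⟨k, hk⟩ hm0]
          omega
        · intro r _ _; positivity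
    _ = 2 ^ l * ∑ r ∈ Finset.range (m / 2 + 1), P ^ r := by rw [Finset.mul_sum]
    _ ≤ 2 ^ l * P ^ (m / 2 + 1) := by
        apply mul_le_mul_of_nonneg_left (geom_le_pow P hP2 _) (by positivity)
  -- the main inequality
  have hmain : (2:ℤ) ^ (2 * l) * P ^ (m / 2 + 1) < P ^ m := by
    have hsplit : m = (m / 2 + 1) + (m / 2 - 1) := by omega
    have hexp : 2 * l < m / 2 - 1 := by omega
    calc (2:ℤ) ^ (2 * l) * P ^ (m / 2 + 1)
        < P ^ (m / 2 - 1) * P ^ (m / 2 + 1) := by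
          apply mul_lt_mul_of_pos_right _ (by positivity)
          calc (2:ℤ) ^ (2 * l) < 2 ^ (m / 2 - 1) :=
            pow_lt_pow_right₀ (by norm_num) hexp
          _ ≤ P ^ (m / 2 - 1) := pow_le_pow_left₀ (by norm_num) hP2 _
    _ = P ^ m := by rw [mul_comm, ← pow_add]; congr 1; omega
  have hlow := hlower m hm0 hme
  -- conclude
  intro hzero
  have heq : Lm = -S := by linarith
  have hLmS : |Lm| ≤ |S| := by rw [heq, abs_neg]
  have c1 : P ^ m ≤ 2 ^ l * |Lm| := hlow
  have c2 : 2 ^ l * |Lm| ≤ 2 ^ l * |S| := by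
    apply mul_le_mul_of_nonneg_left hLmS (by positivity)
  have c3 : (2:ℤ) ^ l * |S| ≤ 2 ^ l * (2 ^ l * P ^ (m / 2 + 1)) := by
    apply mul_le_mul_of_nonneg_left hSbound (by positivity)
  have c4 : (2:ℤ) ^ l * (2 ^ l * P ^ (m / 2 + 1)) = 2 ^ (2 * l) * P ^ (m / 2 + 1) := by
    rw [← mul_assoc, ← pow_add, two_mul]
  linarith
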